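/- Let J be a nonzero real d×d matrix and G(J) the topological group with underlying space ℝ^d × ℝ and multiplication (v,t)·(u,s) = (v + exp(t·J)·u, t+s). Let N be a discrete subgroup of the center of G(J). Then there exists a topological group automorphism Φ of G(J) such that the subgroup M = Φ(N) satisfies: for every (v,t) ∈ M, both (v,0) ∈ M and (0,t) ∈ M; i.e., M is the internal direct product of M ∩ (ℝ^d × {0}) and M ∩ ({0} × ℝ). -/

import Mathlib

open scoped Matrix
open NormedSpace

noncomputable section

/-- `S(A) = ∑_{n ≥ 0} Aⁿ/(n+1)!`, the power series with `A * S(A) = exp A - 1`. -/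
def matS {d : ℕ} (A : Matrix (Fin d) (Fin d) ℝ) : Matrix (Fin d) (Fin d) ℝ :=
  ∑' n : ℕ, (((n + 1).factorial : ℝ))⁻¹ • A ^ n

/-- The almost Abelian group `G(J) = ℝ^d ⋊ ℝ` with multiplication
`(v,t)·(u,s) = (v + exp(tJ)u, t+s)`. -/
@[ext] structure GJ (d : ℕ) (J : Matrix (Fin d) (Fin d) ℝ) where
  v : Fin d → ℝ
  t : ℝ

namespace GJ

variable {d : ℕ} {J : Matrix (Fin d) (Fin d) ℝ}

lemma exp_smul_add (a b : ℝ) (J : Matrix (Fin d) (Fin d) ℝ) :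
    exp ((a + b) • J) = exp (a • J) * exp (b • J) := by
  rw [add_smul]
  exact Matrix.exp_add_of_commute _ _ (((Commute.refl J).smul_left a).smul_right b)

instance : Group (GJ d J) where
  mul p q := ⟨p.v + (exp (p.t • J)).mulVec q.v, p.t + q.t⟩
  one := ⟨0, 0⟩
  inv p := ⟨-(exp ((-p.t) • J)).mulVec p.v, -p.t⟩
  mul_assoc a b c := by
    ext i
    · show (a.v + (exp (a.t • J)).mulVec b.v + (exp ((a.t + b.t) • J)).mulVec c.v) i = _
      show _ = (a.v + (exp (a.t • J)).mulVec (b.v + (exp (b.t • J)).mulVec c.v)) i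
      rw [exp_smul_add, ← Matrix.mulVec_mulVec, Matrix.mulVec_add, add_assoc]
    · exact add_assoc a.t b.t c.t
  one_mul a := by
    ext i
    · show ((0 : Fin d → ℝ) + (exp ((0 : ℝ) • J)).mulVec a.v) i = a.v i
      rw [zero_smul, exp_zero, Matrix.one_mulVec, zero_add]
    · exact zero_add a.t
  mul_one a := by
    ext i
    · show (a.v + (exp (a.t • J)).mulVec 0) i = a.v i
      rw [Matrix.mulVec_zero, add_zero]
    · exact add_zero a.t
  inv_mul_cancel a := by
    ext i
    · show (-(exp ((-a.t) • J)).mulVec a.v + (exp ((-a.t) • J)).mulVec a.v) i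
        = (0 : Fin d → ℝ) i
      rw [neg_add_cancel]
    · exact neg_add_cancel a.t

/-- The topology of `G(J)` is that of the underlying space `ℝ^d × ℝ`. -/
instance : TopologicalSpace (GJ d J) :=
  TopologicalSpace.induced (fun g => (g.v, g.t)) inferInstance

lemma mul_def (p q : GJ d J) :
    p * q = ⟨p.v + (exp (p.t • J)).mulVec q.v, p.t + q.t⟩ := rfl

end GJ

namespace GJ

variable {d : ℕ} {J : Matrix (Fin d) (Fin d) ℝ}

lemma one_def' : (1 : GJ d J) = ⟨0, 0⟩ := rfl

lemma inv_def' (p : GJ d J) :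
    p⁻¹ = ⟨-(exp ((-p.t) • J)).mulVec p.v, -p.t⟩ := rfl

lemma exp_one_of_center {p : GJ d J} (hp : p ∈ Subgroup.center (GJ d J)) :
    exp (p.t • J) = 1 := by
  rw [Subgroup.mem_center_iff] at hp
  have key : ∀ v : Fin d → ℝ, (exp (p.t • J)).mulVec v = v := by
    intro v
    have h := hp ⟨v, 0⟩
    have hv := congrArg GJ.v h
    simp only [mul_def, zero_smul, exp_zero, Matrix.one_mulVec] at hv
    have h2 : v + p.v = p.v + (exp (p.t • J)).mulVec v := hv
    rw [add_comm v p.v] at h2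
    exact (add_right_injective p.v h2).symm
  ext i j
  have h3 := congrFun (key (Pi.single j 1)) i
  simpa [Matrix.mulVec_single, Matrix.one_apply, Pi.single_apply, eq_comm] using h3

lemma fixed_of_center {p : GJ d J} (hp : p ∈ Subgroup.center (GJ d J)) (t : ℝ) :
    (exp (t • J)).mulVec p.v = p.v := by
  have he1 := exp_one_of_center hp
  rw [Subgroup.mem_center_iff] at hp
  have h := hp ⟨0, t⟩
  have hv := congrArg GJ.v h
  simp only [mul_def, Matrix.mulVec_zero, add_zero, zero_add, he1,
    Matrix.one_mulVec] at hv
  exact hv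

lemma false_of_exp_smul_eq_one (hJ : J ≠ 0) (h : ∀ s : ℝ, exp (s • J) = 1) : False := by
  apply hJ
  letI : SeminormedRing (Matrix (Fin d) (Fin d) ℝ) := Matrix.linftyOpSemiNormedRing
  letI : NormedRing (Matrix (Fin d) (Fin d) ℝ) := Matrix.linftyOpNormedRing
  letI : NormedAlgebra ℝ (Matrix (Fin d) (Fin d) ℝ) := Matrix.linftyOpNormedAlgebra
  have h1 : HasDerivAt (fun u : ℝ => exp (u • J)) (exp ((0:ℝ) • J) * J) 0 :=
    hasDerivAt_exp_smul_const J 0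
  have hf : (fun u : ℝ => exp (u • J)) = fun _ => (1 : Matrix (Fin d) (Fin d) ℝ) := funext h
  rw [hf] at h1
  have h2 : HasDerivAt (fun _ : ℝ => (1 : Matrix (Fin d) (Fin d) ℝ)) 0 0 := hasDerivAt_const 0 1
  have h3 := h1.unique h2
  rwa [zero_smul, exp_zero, one_mul] at h3

lemma continuous_exp_smul (J : Matrix (Fin d) (Fin d) ℝ) :
    Continuous fun s : ℝ => exp (s • J) := by
  letI : SeminormedRing (Matrix (Fin d) (Fin d) ℝ) := Matrix.linftyOpSemiNormedRing
  letI : NormedRing (Matrix (Fin d) (Fin d) ℝ) := Matrix.linftyOpNormedRing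
  letI : NormedAlgebra ℝ (Matrix (Fin d) (Fin d) ℝ) := Matrix.linftyOpNormedAlgebra
  exact continuous_iff_continuousAt.2 fun s => (hasDerivAt_exp_smul_const J s).continuousAt

lemma central_zpow {w : Fin d → ℝ} {a : ℝ}
    (hw : ∀ t : ℝ, (exp (t • J)).mulVec w = w) (k : ℤ) :
    (⟨w, a⟩ : GJ d J) ^ k = ⟨(k : ℝ) • w, (k : ℝ) * a⟩ := by
  induction k using Int.induction_on with
  | zero => rw [zpow_zero, one_def']; ext i <;> simp
  | succ n ih =>
      rw [zpow_add_one, ih, mul_def]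
      dsimp only
      rw [hw]
      ext i
      · simp only [Pi.add_apply, Pi.smul_apply, smul_eq_mul]
        push_cast
        ring
      · push_cast
        ring
  | pred n ih =>
      rw [zpow_sub_one, ih, inv_def', mul_def]
      dsimp only
      rw [hw, Matrix.mulVec_neg, hw]
      ext i
      · simp only [Pi.add_apply, Pi.neg_apply, Pi.smul_apply, smul_eq_mul]
        push_cast
        ring
      · push_cast
        ring

lemma continuous_mk {X : Type*} [TopologicalSpace X] {f : X → Fin d → ℝ} {g : X → ℝ}
    (hf : Continuous f) (hg : Continuous g) :
    Continuous fun x => (⟨f x, g x⟩ : GJ d J) :=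
  continuous_induced_rng.2 (hf.prodMk hg)

lemma continuous_proj : Continuous fun p : GJ d J => (p.v, p.t) := by
  apply continuous_induced_dom

lemma continuous_v : Continuous fun p : GJ d J => p.v :=
  continuous_fst.comp continuous_proj

lemma continuous_t : Continuous fun p : GJ d J => p.t :=
  continuous_snd.comp continuous_proj

/-- The shear automorphism `(v, t) ↦ (v - (t/a) w, t)` for `w` a vector fixed by all `exp(tJ)`. -/
def shear (w : Fin d → ℝ) (a : ℝ)
    (hw : ∀ t : ℝ, (exp (t • J)).mulVec w = w) : GJ d J ≃* GJ d J where
  toFun p := ⟨p.v - (p.t / a) • w, p.t⟩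
  invFun p := ⟨p.v + (p.t / a) • w, p.t⟩
  left_inv p := by ext i <;> simp
  right_inv p := by ext i <;> simp
  map_mul' p q := by
    rw [mul_def, mul_def]
    dsimp only
    rw [Matrix.mulVec_sub, Matrix.mulVec_smul, hw, add_div, add_smul]
    ext i
    · simp only [Pi.add_apply, Pi.sub_apply, Pi.smul_apply, smul_eq_mul]
      ring
    · rfl

lemma shear_apply (w : Fin d → ℝ) (a : ℝ)
    (hw : ∀ t : ℝ, (exp (t • J)).mulVec w = w) (p : GJ d J) :
    (shear w a hw).toMonoidHom p = ⟨p.v - (p.t / a) • w, p.t⟩ := rfl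

end GJ

/-- Every discrete central subgroup `N` of `G(J)` can be mapped by an automorphism of `G(J)`
onto a subgroup `M` that splits as the internal direct product of `M ∩ (ℝ^d × {0})` and
`M ∩ ({0} × ℝ)`. -/
theorem GJ.discrete_central_subgroup_split (d : ℕ) (J : Matrix (Fin d) (Fin d) ℝ)
    (hJ : J ≠ 0) (N : Subgroup (GJ d J)) (hN : N ≤ Subgroup.center (GJ d J))
    (hdisc : DiscreteTopology N) :
    ∃ Φ : GJ d J ≃* GJ d J, Continuous Φ ∧ Continuous Φ.symm ∧
      ∀ g ∈ Subgroup.map Φ.toMonoidHom N,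
        (⟨g.v, 0⟩ : GJ d J) ∈ Subgroup.map Φ.toMonoidHom N ∧
        (⟨0, g.t⟩ : GJ d J) ∈ Subgroup.map Φ.toMonoidHom N := by
  classical
  -- the subgroup of `ℝ` of `t`-components of elements of `N`
  set S : AddSubgroup ℝ :=
    { carrier := {s | ∃ u : Fin d → ℝ, (⟨u, s⟩ : GJ d J) ∈ N}
      zero_mem' := ⟨0, N.one_mem⟩
      add_mem' := by
        rintro s s' ⟨u, hu⟩ ⟨u', hu'⟩
        refine ⟨u + (exp (s • J)).mulVec u', ?_⟩
        have h := N.mul_mem hu hu'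
        rwa [show (⟨u, s⟩ : GJ d J) * ⟨u', s'⟩
          = ⟨u + (exp (s • J)).mulVec u', s + s'⟩ from rfl] at h
      neg_mem' := by
        rintro s ⟨u, hu⟩
        refine ⟨-(exp ((-s) • J)).mulVec u, ?_⟩
        have h := N.inv_mem hu
        rwa [show (⟨u, s⟩ : GJ d J)⁻¹
          = ⟨-(exp ((-s) • J)).mulVec u, -s⟩ from rfl] at h } with hS
  have hSmem : ∀ p ∈ N, p.t ∈ S := fun p hp => ⟨p.v, hp⟩
  rcases S.dense_or_cyclic with hdense | ⟨a, ha⟩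
  · -- dense case is impossible since `J ≠ 0`
    exfalso
    apply GJ.false_of_exp_smul_eq_one hJ
    have hclosed : IsClosed {s : ℝ | exp (s • J) = 1} :=
      isClosed_eq (GJ.continuous_exp_smul J) continuous_const
    have hsub : (S : Set ℝ) ⊆ {s : ℝ | exp (s • J) = 1} := by
      rintro s ⟨u, hu⟩
      exact GJ.exp_one_of_center (hN hu)
    intro s
    have h1 : s ∈ closure (S : Set ℝ) := hdense s
    have h2 := closure_mono hsub h1
    rwa [hclosed.closure_eq] at h2
  · -- cyclic case
    obtain ⟨w, hw⟩ : ∃ u : Fin d → ℝ, (⟨u, a⟩ : GJ d J) ∈ N :=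
      (ha ▸ AddSubgroup.subset_closure (Set.mem_singleton a) : a ∈ S)
    have hwv : ∀ t : ℝ, (exp (t • J)).mulVec w = w := fun t =>
      GJ.fixed_of_center (hN hw) t
    refine ⟨GJ.shear w a hwv, ?_, ?_, ?_⟩
    · -- continuity of Φ
      exact GJ.continuous_mk (GJ.continuous_v.sub
        ((GJ.continuous_t.div_const a).smul continuous_const)) GJ.continuous_t
    · -- continuity of Φ.symm
      exact GJ.continuous_mk (GJ.continuous_v.add
        ((GJ.continuous_t.div_const a).smul continuous_const)) GJ.continuous_t
    · -- the splitting property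
      rintro g ⟨n, hn, rfl⟩
      have hnt : n.t ∈ S := hSmem n hn
      rw [ha, AddSubgroup.mem_closure_singleton] at hnt
      obtain ⟨m, hm⟩ := hnt
      rw [zsmul_eq_mul] at hm
      by_cases haz : a = 0
      · -- then n.t = 0 and everything is trivial
        have hnt0 : n.t = 0 := by rw [← hm, haz, mul_zero]
        constructor
        · refine Subgroup.mem_map.2 ⟨n, hn, ?_⟩
          rw [GJ.shear_apply]
          dsimp only
          ext i
          · rfl
          · exact hnt0
        · refine Subgroup.mem_map.2 ⟨1, N.one_mem, ?_⟩
          rw [map_one, GJ.one_def', GJ.shear_apply]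
          dsimp only
          ext i
          · rfl
          · exact hnt0.symm
      · have hdiv : n.t / a = (m : ℝ) := by
          rw [← hm, mul_div_assoc, div_self haz, mul_one]
        constructor
        · -- (g.v, 0) ∈ M
          have hmul : n * (⟨w, a⟩ : GJ d J) ^ (-m) = ⟨n.v - (m : ℝ) • w, 0⟩ := by
            rw [GJ.central_zpow hwv, GJ.mul_def]
            dsimp only
            rw [Matrix.mulVec_smul, hwv]
            ext i
            · simp only [Pi.add_apply, Pi.sub_apply, Pi.smul_apply, smul_eq_mul]
              push_cast
              ring
            · push_cast
              rw [← hm]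
              ring
          refine Subgroup.mem_map.2 ⟨n * (⟨w, a⟩ : GJ d J) ^ (-m),
            N.mul_mem hn (N.zpow_mem hw _), ?_⟩
          rw [hmul, GJ.shear_apply, GJ.shear_apply]
          dsimp only
          rw [zero_div, zero_smul, sub_zero, hdiv]
        · -- (0, g.t) ∈ M
          have hpow := GJ.central_zpow (J := J) (a := a) hwv m
          refine Subgroup.mem_map.2 ⟨(⟨w, a⟩ : GJ d J) ^ m, N.zpow_mem hw _, ?_⟩
          rw [hpow, GJ.shear_apply, GJ.shear_apply]
          dsimp only
          rw [mul_div_assoc, div_self haz, mul_one, hm]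
          ext i
          · simp
          · rfl
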